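/- Let q > 2 and α ∈ (0, α*(q)). Then I_q(α) = (2/(q-2))·I_{2q/(q-2)}(α^{2/(q-2)}), where on the right-hand side the exponent 2q/(q-2) plays the role of q and α^{2/(q-2)} the role of α. (The substitution t = (u²α)^{-1/(q-2)} transforms one integral into the other, and α ∈ (0, α*(q)) if and only if α^{2/(q-2)} ∈ (0, α*(2q/(q-2))).) -/

import Mathlib

open Set Filter MeasureTheory

noncomputable def fQ (q α t : ℝ) : ℝ := t ^ 2 - 1 - α * t ^ q

noncomputable def alphaStar (q : ℝ) : ℝ := 2 / (q - 2) * ((q - 2) / q) ^ (q / 2)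

noncomputable def x0 (q α : ℝ) : ℝ := sInf {t : ℝ | 0 < t ∧ fQ q α t = 0}

noncomputable def x1 (q α : ℝ) : ℝ := sSup {t : ℝ | 0 < t ∧ fQ q α t = 0}

noncomputable def Iq (q α : ℝ) : ℝ := ∫ t in x0 q α..x1 q α, 1 / Real.sqrt (fQ q α t)

noncomputable def fQd1 (q α t : ℝ) : ℝ := 2 * t - α * q * t ^ (q - 1)

noncomputable def fQd2 (q α t : ℝ) : ℝ := 2 - α * q * (q - 1) * t ^ (q - 2)

noncomputable def fQd3 (q α t : ℝ) : ℝ := -(α * q * (q - 1) * (q - 2) * t ^ (q - 3))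

noncomputable def psiQ (q α t : ℝ) : ℝ := fQd1 q α t ^ 2 - 2 * fQ q α t * fQd2 q α t

/-! ### Auxiliary definitions and lemmas -/

noncomputable def Tmap (q α u : ℝ) : ℝ := α ^ (-(1/(q-2))) * u ^ (-(2/(q-2)))

noncomputable def Umap (q α t : ℝ) : ℝ := α ^ (-(1/2) : ℝ) * t ^ (-((q-2)/2))

lemma Tmap_pos {q α u : ℝ} (hα : 0 < α) (hu : 0 < u) : 0 < Tmap q α u :=
  mul_pos (Real.rpow_pos_of_pos hα _) (Real.rpow_pos_of_pos hu _)

lemma Umap_pos {q α t : ℝ} (hα : 0 < α) (ht : 0 < t) : 0 < Umap q α t :=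
  mul_pos (Real.rpow_pos_of_pos hα _) (Real.rpow_pos_of_pos ht _)

lemma Tmap_Umap {q α t : ℝ} (hq : 2 < q) (hα : 0 < α) (ht : 0 < t) :
    Tmap q α (Umap q α t) = t := by
  have hm : (0:ℝ) < q - 2 := by linarith
  have h1 : ((α : ℝ) ^ (-(1/2) : ℝ)) ^ (-(2/(q-2))) = α ^ (1/(q-2)) := by
    rw [← Real.rpow_mul hα.le]; congr 1; ring
  have h2 : ((t : ℝ) ^ (-((q-2)/2))) ^ (-(2/(q-2))) = t := by
    rw [← Real.rpow_mul ht.le, show -((q-2)/2) * -(2/(q-2)) = 1 by field_simp,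
      Real.rpow_one]
  rw [Tmap, Umap, Real.mul_rpow (by positivity) (by positivity), h1, h2, ← mul_assoc,
    ← Real.rpow_add hα, show -(1/(q-2)) + 1/(q-2) = 0 by ring, Real.rpow_zero, one_mul]

lemma Umap_Tmap {q α u : ℝ} (hq : 2 < q) (hα : 0 < α) (hu : 0 < u) :
    Umap q α (Tmap q α u) = u := by
  have hm : (0:ℝ) < q - 2 := by linarith
  have h1 : ((α : ℝ) ^ (-(1/(q-2)))) ^ (-((q-2)/2)) = α ^ ((1:ℝ)/2) := by
    rw [← Real.rpow_mul hα.le]; congr 1; field_simp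
  have h2 : ((u : ℝ) ^ (-(2/(q-2)))) ^ (-((q-2)/2)) = u := by
    rw [← Real.rpow_mul hu.le, show -(2/(q-2)) * -((q-2)/2) = 1 by field_simp,
      Real.rpow_one]
  rw [Umap, Tmap, Real.mul_rpow (by positivity) (by positivity), h1, h2, ← mul_assoc,
    ← Real.rpow_add hα, show -(1/2) + (1:ℝ)/2 = 0 by ring, Real.rpow_zero, one_mul]

lemma Tmap_lt {q α a b : ℝ} (hq : 2 < q) (hα : 0 < α) (ha : 0 < a) (hab : a < b) :
    Tmap q α b < Tmap q α a := by
  have hm : (0:ℝ) < q - 2 := by linarith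
  have hz : -(2/(q-2)) < 0 := by
    have : (0:ℝ) < 2/(q-2) := by positivity
    linarith
  exact mul_lt_mul_of_pos_left
    ((Real.rpow_lt_rpow_iff_of_neg (ha.trans hab) ha hz).mpr hab)
    (Real.rpow_pos_of_pos hα _)

lemma Umap_lt {q α a b : ℝ} (hq : 2 < q) (hα : 0 < α) (ha : 0 < a) (hab : a < b) :
    Umap q α b < Umap q α a := by
  have hm : (0:ℝ) < q - 2 := by linarith
  have hz : -((q-2)/2) < 0 := by
    have : (0:ℝ) < (q-2)/2 := by positivity
    linarith
  exact mul_lt_mul_of_pos_left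
    ((Real.rpow_lt_rpow_iff_of_neg (ha.trans hab) ha hz).mpr hab)
    (Real.rpow_pos_of_pos hα _)

lemma Tmap_le {q α a b : ℝ} (hq : 2 < q) (hα : 0 < α) (ha : 0 < a) (hab : a ≤ b) :
    Tmap q α b ≤ Tmap q α a := by
  rcases eq_or_lt_of_le hab with rfl | h
  · exact le_refl _
  · exact (Tmap_lt hq hα ha h).le

lemma fQ_subst {q α u : ℝ} (hq : 2 < q) (hα : 0 < α) (hu : 0 < u) :
    fQ q α (Tmap q α u) =
      α ^ (-(2/(q-2))) * u ^ (-(2*q/(q-2))) * fQ (2*q/(q-2)) (α ^ (2/(q-2))) u := by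
  have hm : (0:ℝ) < q - 2 := by linarith
  have P1 : (α ^ (-(1/(q-2))) * u ^ (-(2/(q-2))))^2
      = α ^ (-(2/(q-2))) * u ^ (-(4/(q-2))) := by
    rw [mul_pow, ← Real.rpow_natCast (α ^ (-(1/(q-2)))) 2,
      ← Real.rpow_natCast (u ^ (-(2/(q-2)))) 2, ← Real.rpow_mul hα.le, ← Real.rpow_mul hu.le]
    congr 1
    · congr 1; push_cast; ring
    · congr 1; push_cast; ring
  have P2 : α * (α ^ (-(1/(q-2))) * u ^ (-(2/(q-2)))) ^ q
      = α ^ (-(2/(q-2))) * u ^ (-(2*q/(q-2))) := by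
    rw [Real.mul_rpow (by positivity) (by positivity), ← Real.rpow_mul hα.le,
      ← Real.rpow_mul hu.le, ← mul_assoc]
    nth_rewrite 1 [← Real.rpow_one α]
    rw [← Real.rpow_add hα]
    congr 1
    · field_simp; ring
    · congr 1; ring
  have R1 : u ^ (-(2*q/(q-2))) * u ^ (2:ℕ) = u ^ (-(4/(q-2))) := by
    rw [← Real.rpow_natCast u 2, ← Real.rpow_add hu]
    congr 1; push_cast; field_simp; ring
  have R2 : α ^ (-(2/(q-2))) * α ^ (2/(q-2)) = 1 := by
    rw [← Real.rpow_add hα]; norm_num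
  have R3 : u ^ (-(2*q/(q-2))) * u ^ (2*q/(q-2)) = 1 := by
    rw [← Real.rpow_add hu]; norm_num
  unfold fQ Tmap
  rw [P1, P2]
  have expand : α ^ (-(2/(q-2))) * u ^ (-(2*q/(q-2)))
        * (u ^ 2 - 1 - α ^ (2/(q-2)) * u ^ (2*q/(q-2)))
      = α ^ (-(2/(q-2))) * (u ^ (-(2*q/(q-2))) * u ^ (2:ℕ))
        - α ^ (-(2/(q-2))) * u ^ (-(2*q/(q-2)))
        - (α ^ (-(2/(q-2))) * α ^ (2/(q-2))) * (u ^ (-(2*q/(q-2))) * u ^ (2*q/(q-2))) := by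
    ring
  rw [expand, R1, R2, R3]
  ring

lemma root_gt_one {q α t : ℝ} (hα : 0 < α) (ht : 0 < t) (hf : fQ q α t = 0) : 1 < t := by
  have h1 : 0 < α * t ^ q := mul_pos hα (Real.rpow_pos_of_pos ht _)
  unfold fQ at hf
  by_contra hle
  push_neg at hle
  have h2 : t^2 ≤ 1 := by nlinarith
  linarith

lemma root_le {q α t : ℝ} (hq : 2 < q) (hα : 0 < α) (ht : 0 < t) (hf : fQ q α t = 0) :
    t ≤ (α⁻¹) ^ ((q-2)⁻¹) := by
  have hm : (0:ℝ) < q - 2 := by linarith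
  have hsplit : t ^ q = t ^ (q-2) * t ^ (2:ℕ) := by
    rw [← Real.rpow_natCast t 2, ← Real.rpow_add ht]; congr 1; push_cast; ring
  have hpos : 0 < t ^ (q-2) := Real.rpow_pos_of_pos ht _
  have ht2 : (0:ℝ) < t ^ (2:ℕ) := by positivity
  have h2 : α * t ^ (q-2) < 1 := by
    have heq : α * t ^ q = t^2 - 1 := by unfold fQ at hf; linarith
    rw [hsplit] at heq
    nlinarith
  have h3 : t ^ (q-2) < α⁻¹ := by
    calc t ^ (q-2) = α⁻¹ * (α * t^(q-2)) := by field_simp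
    _ < α⁻¹ * 1 := mul_lt_mul_of_pos_left h2 (by positivity)
    _ = α⁻¹ := mul_one _
  calc t = (t ^ (q-2)) ^ ((q-2)⁻¹) := by
        rw [← Real.rpow_mul ht.le, mul_inv_cancel₀ hm.ne', Real.rpow_one]
  _ ≤ (α⁻¹) ^ ((q-2)⁻¹) := Real.rpow_le_rpow (by positivity) h3.le (by positivity)

lemma rootSet_closed {q α : ℝ} (hq : 2 < q) (hα : 0 < α) :
    IsClosed {t : ℝ | 0 < t ∧ fQ q α t = 0} := by
  have hq0 : (0:ℝ) < q := by linarith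
  have hset : {t : ℝ | 0 < t ∧ fQ q α t = 0} = Ici (1:ℝ) ∩ {t | fQ q α t = 0} := by
    ext t
    simp only [mem_setOf_eq, mem_inter_iff, mem_Ici]
    constructor
    · rintro ⟨h1, h2⟩; exact ⟨(root_gt_one hα h1 h2).le, h2⟩
    · rintro ⟨h1, h2⟩; exact ⟨lt_of_lt_of_le one_pos h1, h2⟩
  rw [hset]
  refine isClosed_Ici.inter (isClosed_eq ?_ continuous_const)
  exact ((continuous_pow 2).sub continuous_const).sub
    (continuous_const.mul (Real.continuous_rpow_const hq0.le))

lemma rootSet_eq {q α : ℝ} (hq : 2 < q) (hα : 0 < α) :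
    {t : ℝ | 0 < t ∧ fQ q α t = 0}
      = Tmap q α '' {u : ℝ | 0 < u ∧ fQ (2*q/(q-2)) (α ^ (2/(q-2))) u = 0} := by
  ext t
  constructor
  · rintro ⟨ht, hft⟩
    have hU : 0 < Umap q α t := Umap_pos hα ht
    refine ⟨Umap q α t, ⟨hU, ?_⟩, Tmap_Umap hq hα ht⟩
    have h := fQ_subst hq hα hU
    rw [Tmap_Umap hq hα ht, hft] at h
    have hc : (0:ℝ) < α ^ (-(2/(q-2))) * (Umap q α t) ^ (-(2*q/(q-2))) :=
      mul_pos (Real.rpow_pos_of_pos hα _) (Real.rpow_pos_of_pos hU _)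
    rcases mul_eq_zero.mp h.symm with h' | h'
    · exact absurd h' hc.ne'
    · exact h'
  · rintro ⟨u, ⟨hu, hfu⟩, rfl⟩
    exact ⟨Tmap_pos hα hu, by rw [fQ_subst hq hα hu, hfu, mul_zero]⟩

lemma alphaStar_pos {q : ℝ} (hq : 2 < q) : 0 < alphaStar q := by
  have hm : (0:ℝ) < q - 2 := by linarith
  have hq0 : (0:ℝ) < q := by linarith
  exact mul_pos (by positivity) (Real.rpow_pos_of_pos (by positivity) _)

lemma alphaStar_subst {q : ℝ} (hq : 2 < q) :
    alphaStar (2*q/(q-2)) = alphaStar q ^ (2/(q-2)) := by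
  have hm : (0:ℝ) < q - 2 := by linarith
  have hq0 : (0:ℝ) < q := by linarith
  unfold alphaStar
  have hpne : 2*q/(q-2) ≠ 0 := by positivity
  have h2 : (2*q/(q-2) - 2) / (2*q/(q-2)) = 2/q := by
    rw [div_eq_div_iff hpne hq0.ne']
    field_simp
    ring
  rw [h2, show 2*q/(q-2) - 2 = 4/(q-2) by field_simp; ring,
    show 2*q/(q-2)/2 = q/(q-2) by ring,
    show (2:ℝ)/(4/(q-2)) = (q-2)/2 by field_simp; ring,
    Real.mul_rpow (by positivity) (by positivity), ← Real.rpow_mul (by positivity),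
    show q/2 * (2/(q-2)) = q/(q-2) by ring,
    show (q-2)/q = (q-2)/2 * (2/q) by ring,
    Real.mul_rpow (by positivity) (by positivity),
    show (2:ℝ)/(q-2) = ((q-2)/2)⁻¹ from (inv_div _ _).symm,
    Real.inv_rpow (by positivity), ← Real.rpow_neg (by positivity),
    ← mul_assoc, ← Real.rpow_add (by positivity : (0:ℝ) < (q-2)/2),
    show -((q-2)/2)⁻¹ + q/(q-2) = 1 by rw [inv_div]; field_simp; ring, Real.rpow_one]

lemma alphaStar_iff {q : ℝ} (hq : 2 < q) {β : ℝ} (hβ : 0 < β) :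
    β ∈ Ioo (0:ℝ) (alphaStar q) ↔ β ^ (2/(q-2)) ∈ Ioo (0:ℝ) (alphaStar (2*q/(q-2))) := by
  have hm : (0:ℝ) < q - 2 := by linarith
  have hc : (0:ℝ) < 2/(q-2) := by positivity
  rw [alphaStar_subst hq]
  constructor
  · rintro ⟨h1, h2⟩
    exact ⟨Real.rpow_pos_of_pos hβ _,
      (Real.rpow_lt_rpow_iff hβ.le (alphaStar_pos hq).le hc).mpr h2⟩
  · rintro ⟨h1, h2⟩
    exact ⟨hβ, (Real.rpow_lt_rpow_iff hβ.le (alphaStar_pos hq).le hc).mp h2⟩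

theorem stmt_6 (q α : ℝ) (hq : 2 < q) (hα : α ∈ Ioo (0 : ℝ) (alphaStar q)) :
    Iq q α = 2 / (q - 2) * Iq (2 * q / (q - 2)) (α ^ (2 / (q - 2))) ∧
    α ^ (2 / (q - 2)) ∈ Ioo (0 : ℝ) (alphaStar (2 * q / (q - 2))) ∧
    (∀ β : ℝ, 0 < β →
      (β ∈ Ioo (0 : ℝ) (alphaStar q) ↔
        β ^ (2 / (q - 2)) ∈ Ioo (0 : ℝ) (alphaStar (2 * q / (q - 2))))) := by
  obtain ⟨hα0, hαs⟩ := hα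
  have hm : (0:ℝ) < q - 2 := by linarith
  have hq0 : (0:ℝ) < q := by linarith
  have hβ0 : 0 < α ^ (2/(q-2)) := Real.rpow_pos_of_pos hα0 _
  have hp2 : 2 < 2*q/(q-2) := by rw [lt_div_iff₀ hm]; linarith
  refine ⟨?_, (alphaStar_iff hq hα0).mp ⟨hα0, hαs⟩, fun γ hγ => alphaStar_iff hq hγ⟩
  have hroot := rootSet_eq hq hα0
  by_cases hne : {u : ℝ | 0 < u ∧ fQ (2*q/(q-2)) (α ^ (2/(q-2))) u = 0}.Nonempty
  · -- nonempty case
    set S := {u : ℝ | 0 < u ∧ fQ (2*q/(q-2)) (α ^ (2/(q-2))) u = 0} with hSdef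
    have hbddA : BddAbove S :=
      ⟨(α ^ (2/(q-2)))⁻¹ ^ ((2*q/(q-2)-2)⁻¹), fun t ht => root_le hp2 hβ0 ht.1 ht.2⟩
    have hbddB : BddBelow S := ⟨1, fun t ht => (root_gt_one hβ0 ht.1 ht.2).le⟩
    have hclosed := rootSet_closed hp2 hβ0
    have hy0S : sInf S ∈ S := hclosed.csInf_mem hne hbddB
    have hy1S : sSup S ∈ S := hclosed.csSup_mem hne hbddA
    have hy0pos : 0 < sInf S := hy0S.1
    have hy1pos : 0 < sSup S := hy1S.1
    have hy01 : sInf S ≤ sSup S := csInf_le_csSup hne hbddB hbddA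
    have hlb : ∀ t ∈ Tmap q α '' S, Tmap q α (sSup S) ≤ t := by
      rintro t ⟨u, huS, rfl⟩
      exact Tmap_le hq hα0 huS.1 (le_csSup hbddA huS)
    have hub : ∀ t ∈ Tmap q α '' S, t ≤ Tmap q α (sInf S) := by
      rintro t ⟨u, huS, rfl⟩
      exact Tmap_le hq hα0 hy0pos (csInf_le hbddB huS)
    have hx0 : x0 q α = Tmap q α (sSup S) := by
      rw [x0, hroot]
      exact le_antisymm (csInf_le ⟨Tmap q α (sSup S), hlb⟩ (mem_image_of_mem _ hy1S))
        (le_csInf (hne.image _) hlb)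
    have hx1 : x1 q α = Tmap q α (sInf S) := by
      rw [x1, hroot]
      exact le_antisymm (csSup_le (hne.image _) hub)
        (le_csSup ⟨Tmap q α (sInf S), hub⟩ (mem_image_of_mem _ hy0S))
    have hxp0 : x0 (2*q/(q-2)) (α ^ (2/(q-2))) = sInf S := rfl
    have hxp1 : x1 (2*q/(q-2)) (α ^ (2/(q-2))) = sSup S := rfl
    have hTy : Tmap q α (sSup S) ≤ Tmap q α (sInf S) := Tmap_le hq hα0 hy0pos hy01
    have himg : Tmap q α '' Ioo (sInf S) (sSup S)
        = Ioo (Tmap q α (sSup S)) (Tmap q α (sInf S)) := by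
      ext t
      constructor
      · rintro ⟨u, hu, rfl⟩
        exact ⟨Tmap_lt hq hα0 (hy0pos.trans hu.1) hu.2, Tmap_lt hq hα0 hy0pos hu.1⟩
      · rintro ⟨h1, h2⟩
        have ht0 : 0 < t := lt_trans (Tmap_pos hα0 hy1pos) h1
        refine ⟨Umap q α t, ⟨?_, ?_⟩, Tmap_Umap hq hα0 ht0⟩
        · have := Umap_lt hq hα0 ht0 h2
          rwa [Umap_Tmap hq hα0 hy0pos] at this
        · have := Umap_lt hq hα0 (Tmap_pos hα0 hy1pos) h1
          rwa [Umap_Tmap hq hα0 hy1pos] at this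
    have hderiv : ∀ u ∈ Ioo (sInf S) (sSup S),
        HasDerivWithinAt (Tmap q α)
          (α ^ (-(1/(q-2))) * (-(2/(q-2)) * u ^ (-(2/(q-2)) - 1))) (Ioo (sInf S) (sSup S)) u := by
      intro u hu
      have hu0 : 0 < u := hy0pos.trans hu.1
      have h := (Real.hasDerivAt_rpow_const (p := -(2/(q-2))) (Or.inl hu0.ne')).const_mul
        (α ^ (-(1/(q-2))))
      exact h.hasDerivWithinAt
    have hinj : InjOn (Tmap q α) (Ioo (sInf S) (sSup S)) := by
      intro a ha b hb hab
      rcases lt_trichotomy a b with h | h | h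
      · exact absurd hab (Tmap_lt hq hα0 (hy0pos.trans ha.1) h).ne'
      · exact h
      · exact absurd hab (Tmap_lt hq hα0 (hy0pos.trans hb.1) h).ne
    have hcv := MeasureTheory.integral_image_eq_integral_abs_deriv_smul measurableSet_Ioo
      hderiv hinj (fun t => 1 / Real.sqrt (fQ q α t))
    rw [himg] at hcv
    have hpt : EqOn
        (fun u => |α ^ (-(1/(q-2))) * (-(2/(q-2)) * u ^ (-(2/(q-2)) - 1))| •
          (1 / Real.sqrt (fQ q α (Tmap q α u))))
        (fun u => (2/(q-2)) * (1 / Real.sqrt (fQ (2*q/(q-2)) (α ^ (2/(q-2))) u)))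
        (Ioo (sInf S) (sSup S)) := by
      intro u hu
      have hu0 : 0 < u := hy0pos.trans hu.1
      have hc : (0:ℝ) < α ^ (-(1/(q-2))) := Real.rpow_pos_of_pos hα0 _
      have hw : (0:ℝ) < u ^ (-(q/(q-2))) := Real.rpow_pos_of_pos hu0 _
      have he : -(2/(q-2)) - 1 = -(q/(q-2)) := by field_simp; ring
      have habs : |α ^ (-(1/(q-2))) * (-(2/(q-2)) * u ^ (-(2/(q-2)) - 1))|
          = 2/(q-2) * (α ^ (-(1/(q-2))) * u ^ (-(q/(q-2)))) := by
        have hneg : -(2/(q-2)) < (0:ℝ) := by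
          have h' : (0:ℝ) < 2/(q-2) := by positivity
          linarith
        rw [he, abs_of_neg (mul_neg_of_pos_of_neg hc (mul_neg_of_neg_of_pos hneg hw))]
        ring
      have hsq1 : Real.sqrt (α ^ (-(2/(q-2)))) = α ^ (-(1/(q-2))) := by
        rw [Real.sqrt_eq_rpow, ← Real.rpow_mul hα0.le]; congr 1; ring
      have hsq2 : Real.sqrt (u ^ (-(2*q/(q-2)))) = u ^ (-(q/(q-2))) := by
        rw [Real.sqrt_eq_rpow, ← Real.rpow_mul hu0.le]; congr 1; ring
      simp only [smul_eq_mul]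
      rw [fQ_subst hq hα0 hu0, habs, mul_assoc (α ^ (-(2/(q-2)))),
        Real.sqrt_mul (by positivity), Real.sqrt_mul (by positivity), hsq1, hsq2]
      set s := Real.sqrt (fQ (2*q/(q-2)) (α ^ (2/(q-2))) u) with hs
      rcases eq_or_ne s 0 with h0 | h0
      · rw [h0]; simp
      · field_simp
    rw [MeasureTheory.setIntegral_congr_fun measurableSet_Ioo hpt,
      MeasureTheory.integral_const_mul] at hcv
    rw [Iq, Iq, hx0, hx1, hxp0, hxp1, intervalIntegral.integral_of_le hTy,
      intervalIntegral.integral_of_le hy01, MeasureTheory.integral_Ioc_eq_integral_Ioo,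
      MeasureTheory.integral_Ioc_eq_integral_Ioo, hcv]
  · -- empty case
    have hempty : {u : ℝ | 0 < u ∧ fQ (2*q/(q-2)) (α ^ (2/(q-2))) u = 0} = ∅ :=
      not_nonempty_iff_eq_empty.mp hne
    have hSq : {t : ℝ | 0 < t ∧ fQ q α t = 0} = ∅ := by
      rw [hroot, hempty, image_empty]
    have e1 : x0 q α = 0 := by rw [x0, hSq, Real.sInf_empty]
    have e2 : x1 q α = 0 := by rw [x1, hSq, Real.sSup_empty]
    have e3 : x0 (2*q/(q-2)) (α ^ (2/(q-2))) = x1 (2*q/(q-2)) (α ^ (2/(q-2))) := by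
      rw [x0, x1, hempty, Real.sInf_empty, Real.sSup_empty]
    rw [Iq, Iq, e1, e2, e3, intervalIntegral.integral_same, intervalIntegral.integral_same,
      mul_zero]
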